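/- Let d ≥ 1 and let N(u) = (n_1(u),…,n_d(u)) be d-tuples of positive integers indexed by positive integers u such that n_j(u)/u → α_j for reals α_j > 0 as u → ∞. Then for every complex w with Re(w) > d/2, lim_{u→∞} u^{−2w} · ∑_{Λ_K(u) ≠ 0} Λ_K(u)^{−w} = (2π)^{−2w} · ∑_{m ∈ ℤ^d, m ≠ 0} ((m_1/α_1)² + ⋯ + (m_d/α_d)²)^{−w}, where the series on the right converges absolutely. -/

import Mathlib

open MeasureTheory Real Filter

/-- Eigenvalues of the combinatorial Laplacian on the discrete torus determined by `N`. -/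
noncomputable def Lam (d : ℕ) (N : Fin d → ℕ) (K : (j : Fin d) → Fin (N j)) : ℝ :=
  2 * d - ∑ j, 2 * Real.cos (2 * Real.pi * (K j : ℝ) / (N j : ℝ))

private lemma summable_pi_prod {d : ℕ} {g : ℤ → ℝ} (hg : ∀ x, 0 ≤ g x) (h : Summable g) :
    Summable fun m : Fin d → ℤ => ∏ j, g (m j) := by
  induction d with
  | zero => exact (hasSum_fintype _).summable
  | succ d ih =>
    have h2 := h.mul_of_nonneg ih (fun _ => hg _)
      (fun m => Finset.prod_nonneg fun j _ => hg _)
    refine ((Fin.consEquiv (fun _ : Fin (d+1) => ℤ)).summable_iff).mp (h2.congr ?_)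
    intro x
    simp [Fin.consEquiv, Fin.prod_univ_succ]

private lemma summable_int_aux {t : ℝ} (ht : 1 / 2 < t) :
    Summable fun x : ℤ => (1 + (x : ℝ) ^ 2) ^ (-t) := by
  have h1 : (1 : ℝ) < 2 * t := by linarith
  refine (summable_abs_int_rpow h1).of_norm_bounded_eventually ?_
  filter_upwards [(Set.finite_singleton (0 : ℤ)).eventually_cofinite_notMem] with x hx
  have hx0 : (x : ℝ) ≠ 0 := Int.cast_ne_zero.mpr (by simpa using hx)
  have hx2 : (0 : ℝ) < (x : ℝ) ^ 2 := by positivity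
  have e1 : ((x : ℝ) ^ 2) ^ (-t) = |(x : ℝ)| ^ (-(2 * t)) := by
    rw [← sq_abs, ← Real.rpow_natCast |(x : ℝ)| 2, ← Real.rpow_mul (abs_nonneg _)]
    norm_num
  rw [Real.norm_eq_abs, abs_of_nonneg (Real.rpow_nonneg (by positivity) _), ← e1]
  exact Real.rpow_le_rpow_of_nonpos hx2 (by linarith) (by linarith)

private lemma summable_sq_sum {d : ℕ} (hd : 1 ≤ d) {s : ℝ} (hs : (d : ℝ) / 2 < s) :
    Summable fun m : {m : Fin d → ℤ // m ≠ 0} => (∑ j, ((m.1 j : ℝ)) ^ 2) ^ (-s) := by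
  have hd0 : (0 : ℝ) < d := by exact_mod_cast hd
  set t : ℝ := s / d with ht_def
  have ht : 1 / 2 < t := by rw [ht_def, lt_div_iff₀ hd0]; nlinarith
  have ht0 : 0 < t := lt_trans (by norm_num) ht
  have hs0 : 0 < s := by nlinarith
  have hsum := ((summable_pi_prod (g := fun x : ℤ => (1 + (x : ℝ) ^ 2) ^ (-t))
      (fun x => Real.rpow_nonneg (by positivity) _) (summable_int_aux ht)).subtype
      {m : Fin d → ℤ | m ≠ 0}).mul_left ((2 : ℝ) ^ s)
  refine hsum.of_nonneg_of_le (fun m => Real.rpow_nonneg (by positivity) _) ?_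
  rintro ⟨m, hm⟩
  set S : ℝ := ∑ j, ((m j : ℝ)) ^ 2 with hS_def
  have hS_nonneg : 0 ≤ S := Finset.sum_nonneg fun j _ => sq_nonneg _
  obtain ⟨j0, hj0⟩ : ∃ j, m j ≠ 0 := by
    by_contra hc; push_neg at hc; exact hm (funext hc)
  have hS1 : 1 ≤ S := by
    have h1 : (1 : ℝ) ≤ ((m j0 : ℝ)) ^ 2 := by
      have h2 : 1 ≤ |m j0| := Int.one_le_abs hj0
      have h3 : (1 : ℝ) ≤ |(m j0 : ℝ)| := by exact_mod_cast h2.trans_eq (by push_cast; rfl)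
      nlinarith [sq_abs ((m j0 : ℝ))]
    exact h1.trans (Finset.single_le_sum (fun j _ => sq_nonneg ((m j : ℝ))) (Finset.mem_univ j0))
  have hS0 : 0 < S := lt_of_lt_of_le one_pos hS1
  have hprod_le : ∏ j, (1 + ((m j : ℝ)) ^ 2) ≤ (2 * S) ^ d := by
    have h5 : ∏ j, (1 + ((m j : ℝ)) ^ 2) ≤ ∏ _j : Fin d, (2 * S) := by
      refine Finset.prod_le_prod (fun j _ => by positivity) (fun j _ => ?_)
      have : ((m j : ℝ)) ^ 2 ≤ S :=
        Finset.single_le_sum (fun i _ => sq_nonneg ((m i : ℝ))) (Finset.mem_univ j)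
      linarith
    simpa using h5
  have hprod_pos : 0 < ∏ j, (1 + ((m j : ℝ)) ^ 2) := Finset.prod_pos fun j _ => by positivity
  have key : S ^ (-s) ≤ 2 ^ s * ∏ j, (1 + ((m j : ℝ)) ^ 2) ^ (-t) := by
    have e1 : ∏ j, (1 + ((m j : ℝ)) ^ 2) ^ (-t) = (∏ j, (1 + ((m j : ℝ)) ^ 2)) ^ (-t) :=
      Real.finset_prod_rpow _ _ (fun j _ => by positivity) _
    have e2 : ((2 * S) ^ d) ^ (-t) = (2 * S) ^ (-s) := by
      rw [← Real.rpow_natCast (2 * S) d, ← Real.rpow_mul (by positivity)]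
      congr 1
      field_simp [ht_def]
      rw [ht_def]; field_simp
    have e3 : (2 * S) ^ (-s) = 2 ^ (-s) * S ^ (-s) :=
      Real.mul_rpow (by norm_num) hS_nonneg
    have h4 : ((2 * S) ^ d) ^ (-t) ≤ (∏ j, (1 + ((m j : ℝ)) ^ 2)) ^ (-t) :=
      Real.rpow_le_rpow_of_nonpos hprod_pos hprod_le (by linarith)
    calc S ^ (-s) = 2 ^ s * ((2 * S) ^ d) ^ (-t) := by
          rw [e2, e3, ← mul_assoc, ← Real.rpow_add (by norm_num : (0:ℝ) < 2)]
          simp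
      _ ≤ 2 ^ s * (∏ j, (1 + ((m j : ℝ)) ^ 2)) ^ (-t) := by
          exact mul_le_mul_of_nonneg_left h4 (Real.rpow_nonneg (by norm_num) _)
      _ = 2 ^ s * ∏ j, (1 + ((m j : ℝ)) ^ 2) ^ (-t) := by rw [e1]
  exact key

private lemma sin_sq_term (x : ℝ) : 2 - 2 * Real.cos (2 * x) = (2 * Real.sin x) ^ 2 := by
  nlinarith [Real.sin_sq_add_cos_sq x, Real.cos_two_mul x]

private lemma Lam_eq {d : ℕ} (n : Fin d → ℕ) (K : (j : Fin d) → Fin (n j)) :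
    Lam d n K = ∑ j, (2 * Real.sin (Real.pi * (K j : ℝ) / (n j : ℝ))) ^ 2 := by
  unfold Lam
  have h2d : (2 : ℝ) * d = ∑ _j : Fin d, (2 : ℝ) := by simp [mul_comm]
  rw [h2d, ← Finset.sum_sub_distrib]
  refine Finset.sum_congr rfl fun j _ => ?_
  have harg : 2 * Real.pi * (K j : ℝ) / (n j : ℝ) = 2 * (Real.pi * (K j : ℝ) / (n j : ℝ)) := by
    ring
  rw [harg, sin_sq_term]

private noncomputable def Lfun (d : ℕ) (N : ℕ → Fin d → ℕ) (u : ℕ) (m : Fin d → ℤ) : ℝ :=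
  ∑ j, (2 * (u : ℝ) * Real.sin (Real.pi * (m j : ℝ) / (N u j : ℝ))) ^ 2

private noncomputable def Ffun (d : ℕ) (N : ℕ → Fin d → ℕ) (w : ℂ) (u : ℕ)
    (m : {m : Fin d → ℤ // m ≠ 0}) : ℂ :=
  if ∀ j, -(N u j : ℤ) < 2 * m.1 j ∧ 2 * m.1 j ≤ (N u j : ℤ) then
    ((Lfun d N u m.1 : ℝ) : ℂ) ^ (-w)
  else 0

private lemma cpow_sq_aux {a : ℝ} (ha : 0 < a) (w : ℂ) :
    (((a ^ 2 : ℝ)) : ℂ) ^ (-w) = ((a : ℝ) : ℂ) ^ (-(2 * w)) := by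
  have ha' : ((a : ℝ) : ℂ) ≠ 0 := by exact_mod_cast ha.ne'
  rw [sq]
  push_cast
  rw [Complex.mul_cpow_ofReal_nonneg ha.le ha.le, ← Complex.cpow_add _ _ ha']
  ring_nf

/-- balanced residue -/
private def bal (n : ℕ) (k : ℕ) : ℤ := if 2 * (k : ℤ) ≤ n then (k : ℤ) else (k : ℤ) - n

private def unbal (n : ℕ) (x : ℤ) : ℕ := (if 0 ≤ x then x.toNat else (x + n).toNat) % n

private lemma unbal_raw {n : ℕ} (hn : 0 < n) {x : ℤ} (h1 : -(n : ℤ) < 2 * x) (h2 : 2 * x ≤ (n : ℤ)) :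
    unbal n x = (if 0 ≤ x then x.toNat else (x + n).toNat) := by
  unfold unbal
  apply Nat.mod_eq_of_lt
  split <;> omega

private lemma bal_sin_sq {n : ℕ} (hn : 0 < n) (k : ℕ) (hk : k < n) :
    (Real.sin (Real.pi * ((bal n k : ℤ) : ℝ) / (n : ℝ))) ^ 2
      = (Real.sin (Real.pi * (k : ℝ) / (n : ℝ))) ^ 2 := by
  have hnR : ((n : ℝ)) ≠ 0 := by positivity
  unfold bal
  split
  · norm_num
  · have harg : Real.pi * (((k : ℤ) - (n : ℤ) : ℤ) : ℝ) / (n : ℝ)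
        = Real.pi * (k : ℝ) / (n : ℝ) - Real.pi := by
      push_cast
      field_simp
    rw [harg, Real.sin_sub_pi]
    ring

private lemma tsum_eq_lemma (d : ℕ) (hd : 1 ≤ d) (N : ℕ → Fin d → ℕ) (hN : ∀ u j, 0 < N u j)
    (w : ℂ) (u : ℕ) (hu : 1 ≤ u) :
    (u : ℂ) ^ (-(2 * w)) *
        ∑ K ∈ Finset.univ.filter
            (fun K : (j : Fin d) → Fin (N u j) => Lam d (N u) K ≠ 0),
          (((Lam d (N u) K : ℝ) : ℂ)) ^ (-w)
      = ∑' m : {m : Fin d → ℤ // m ≠ 0}, Ffun d N w u m := by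
  classical
  have huR : (0 : ℝ) < (u : ℝ) := by exact_mod_cast hu
  set T : Finset {m : Fin d → ℤ // m ≠ 0} :=
    (Fintype.piFinset fun j => Finset.Icc (-(N u j : ℤ)) (N u j)).subtype _ with hT_def
  have hvanish : ∀ m ∉ T, Ffun d N w u m = 0 := by
    intro m hm
    rw [Ffun, if_neg]
    intro hcond
    apply hm
    rw [hT_def, Finset.mem_subtype, Fintype.mem_piFinset]
    intro j
    rw [Finset.mem_Icc]
    have := hcond j
    omega
  rw [tsum_eq_sum hvanish]
  have hp : ∀ m ∈ T, Ffun d N w u m ≠ 0 →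
      (∀ j, -(N u j : ℤ) < 2 * m.1 j ∧ 2 * m.1 j ≤ (N u j : ℤ)) := by
    intro m _ hFne
    by_contra h
    exact hFne (by rw [Ffun, if_neg h])
  rw [← Finset.sum_filter_of_ne hp, Finset.mul_sum]
  -- the junk element
  have hjunk : (fun _ : Fin d => (1 : ℤ)) ≠ 0 := by
    intro h
    have := congrFun h ⟨0, hd⟩
    simp at this
  refine Finset.sum_nbij'
    (i := fun K => if h : (fun j => bal (N u j) (K j : ℕ)) ≠ 0
      then ⟨fun j => bal (N u j) (K j : ℕ), h⟩ else ⟨fun _ => 1, hjunk⟩)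
    (j := fun m => fun jj => (⟨unbal (N u jj) (m.1 jj), Nat.mod_lt _ (hN u jj)⟩ : Fin (N u jj)))
    ?_ ?_ ?_ ?_ ?_
  · -- hi : maps into T.filter
    intro K hK
    simp only [Finset.mem_filter, Finset.mem_univ, true_and] at hK
    have hKne : ∃ j, (K j : ℕ) ≠ 0 := by
      by_contra hc
      push_neg at hc
      apply hK
      rw [Lam_eq]
      refine Finset.sum_eq_zero fun j _ => ?_
      rw [hc j]
      norm_num
    obtain ⟨j0, hj0⟩ := hKne
    have hbal_ne : (fun j => bal (N u j) (K j : ℕ)) ≠ 0 := by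
      intro h
      have h0 := congrFun h j0
      have hlt := (K j0).2
      simp only [Pi.zero_apply] at h0
      unfold bal at h0
      split at h0 <;> omega
    beta_reduce
    rw [dif_pos hbal_ne, Finset.mem_filter]
    constructor
    · rw [hT_def, Finset.mem_subtype, Fintype.mem_piFinset]
      intro j
      rw [Finset.mem_Icc]
      have hlt := (K j).2
      show -(N u j : ℤ) ≤ bal (N u j) (K j : ℕ) ∧ bal (N u j) (K j : ℕ) ≤ (N u j : ℤ)
      unfold bal
      split <;> omega
    · intro j
      have hlt := (K j).2
      show -(N u j : ℤ) < 2 * bal (N u j) (K j : ℕ) ∧ 2 * bal (N u j) (K j : ℕ) ≤ (N u j : ℤ)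
      unfold bal
      split <;> omega
  · -- hj : inverse maps into filter
    intro m hm
    rw [Finset.mem_filter] at hm
    obtain ⟨hmT, hcond⟩ := hm
    rw [Finset.mem_filter]
    refine ⟨Finset.mem_univ _, ?_⟩
    obtain ⟨j0, hj0⟩ : ∃ j, m.1 j ≠ 0 := by
      by_contra hc; push_neg at hc; exact m.2 (funext hc)
    have hub : 0 < unbal (N u j0) (m.1 j0) ∧ unbal (N u j0) (m.1 j0) < N u j0 := by
      have h1 := hcond j0
      have h2 := hN u j0
      rw [unbal_raw (hN u j0) h1.1 h1.2]
      split <;> omega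
    rw [Lam_eq]
    have hpos : 0 < (2 * Real.sin (Real.pi * ((unbal (N u j0) (m.1 j0) : ℕ) : ℝ) / (N u j0 : ℝ))) ^ 2 := by
      have h1 : 0 < Real.sin (Real.pi * ((unbal (N u j0) (m.1 j0) : ℕ) : ℝ) / (N u j0 : ℝ)) := by
        apply Real.sin_pos_of_pos_of_lt_pi
        · have h2 : (0:ℝ) < ((unbal (N u j0) (m.1 j0) : ℕ) : ℝ) := by exact_mod_cast hub.1
          have h3 : (0:ℝ) < ((N u j0 : ℕ) : ℝ) := by exact_mod_cast hN u j0
          positivity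
        · have h2 : ((unbal (N u j0) (m.1 j0) : ℕ) : ℝ) < ((N u j0 : ℕ) : ℝ) := by
            exact_mod_cast hub.2
          have h3 : (0:ℝ) < ((N u j0 : ℕ) : ℝ) := by exact_mod_cast hN u j0
          calc Real.pi * ((unbal (N u j0) (m.1 j0) : ℕ) : ℝ) / (N u j0 : ℝ)
              < Real.pi * ((N u j0 : ℕ) : ℝ) / (N u j0 : ℝ) := by
                rw [div_lt_div_iff_of_pos_right h3]
                exact mul_lt_mul_of_pos_left h2 Real.pi_pos
            _ = Real.pi := by field_simp
      positivity
    have hsum_pos : 0 < ∑ j, (2 * Real.sin (Real.pi *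
        (((⟨unbal (N u j) (m.1 j), Nat.mod_lt _ (hN u j)⟩ : Fin (N u j)) : ℕ) : ℝ) / (N u j : ℝ))) ^ 2 := by
      refine Finset.sum_pos' (fun j _ => sq_nonneg _) ⟨j0, Finset.mem_univ j0, hpos⟩
    exact hsum_pos.ne'
  · -- left inverse
    intro K hK
    simp only [Finset.mem_filter, Finset.mem_univ, true_and] at hK
    have hKne : ∃ j, (K j : ℕ) ≠ 0 := by
      by_contra hc
      push_neg at hc
      apply hK
      rw [Lam_eq]
      refine Finset.sum_eq_zero fun j _ => ?_
      rw [hc j]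
      norm_num
    obtain ⟨j0, hj0⟩ := hKne
    have hbal_ne : (fun j => bal (N u j) (K j : ℕ)) ≠ 0 := by
      intro h
      have h0 := congrFun h j0
      have hlt := (K j0).2
      simp only [Pi.zero_apply] at h0
      unfold bal at h0
      split at h0 <;> omega
    beta_reduce
    rw [dif_pos hbal_ne]
    funext jj
    have hlt := (K jj).2
    have hc : -(N u jj : ℤ) < 2 * bal (N u jj) (K jj : ℕ) ∧
        2 * bal (N u jj) (K jj : ℕ) ≤ (N u jj : ℤ) := by
      unfold bal
      split <;> omega
    apply Fin.ext
    show unbal (N u jj) (bal (N u jj) (K jj : ℕ)) = (K jj : ℕ)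
    rw [unbal_raw (hN u jj) hc.1 hc.2]
    unfold bal
    split <;> split <;> omega
  · -- right inverse
    intro m hm
    rw [Finset.mem_filter] at hm
    obtain ⟨hmT, hcond⟩ := hm
    have heq : (fun jj => bal (N u jj)
        ((⟨unbal (N u jj) (m.1 jj), Nat.mod_lt _ (hN u jj)⟩ : Fin (N u jj)) : ℕ)) = m.1 := by
      funext jj
      have h1 := hcond jj
      show bal (N u jj) (unbal (N u jj) (m.1 jj)) = m.1 jj
      rw [unbal_raw (hN u jj) h1.1 h1.2]
      unfold bal
      split <;> split <;> omega
    have hne : (fun jj => bal (N u jj)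
        (((⟨unbal (N u jj) (m.1 jj), Nat.mod_lt _ (hN u jj)⟩ : Fin (N u jj))) : ℕ)) ≠ 0 := by
      rw [heq]; exact m.2
    beta_reduce
    rw [dif_pos hne]
    exact Subtype.ext heq
  · -- value equality
    intro K hK
    simp only [Finset.mem_filter, Finset.mem_univ, true_and] at hK
    have hKne : ∃ j, (K j : ℕ) ≠ 0 := by
      by_contra hc
      push_neg at hc
      apply hK
      rw [Lam_eq]
      refine Finset.sum_eq_zero fun j _ => ?_
      rw [hc j]
      norm_num
    obtain ⟨j0, hj0⟩ := hKne
    have hbal_ne : (fun j => bal (N u j) (K j : ℕ)) ≠ 0 := by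
      intro h
      have h0 := congrFun h j0
      have hlt := (K j0).2
      simp only [Pi.zero_apply] at h0
      unfold bal at h0
      split at h0 <;> omega
    beta_reduce
    rw [dif_pos hbal_ne, Ffun, if_pos]
    · -- main value computation
      have hL : Lfun d N u (fun j => bal (N u j) (K j : ℕ)) = (u : ℝ) ^ 2 * Lam d (N u) K := by
        rw [Lam_eq, Lfun, Finset.mul_sum]
        refine Finset.sum_congr rfl fun j _ => ?_
        have h5 := bal_sin_sq (hN u j) (K j : ℕ) (K j).2
        calc (2 * (u : ℝ) * Real.sin (Real.pi * ((bal (N u j) (K j : ℕ) : ℤ) : ℝ) / (N u j : ℝ))) ^ 2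
            = (u:ℝ)^2 * (4 * (Real.sin (Real.pi * ((bal (N u j) (K j : ℕ) : ℤ) : ℝ) / (N u j : ℝ))) ^ 2) := by
              ring
          _ = (u:ℝ)^2 * (4 * (Real.sin (Real.pi * ((K j : ℕ) : ℝ) / (N u j : ℝ))) ^ 2) := by
              rw [h5]
          _ = (u:ℝ)^2 * (2 * Real.sin (Real.pi * ((K j : ℕ) : ℝ) / (N u j : ℝ))) ^ 2 := by
              ring
      have hLam_nonneg : 0 ≤ Lam d (N u) K := by
        rw [Lam_eq]
        exact Finset.sum_nonneg fun j _ => sq_nonneg _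
      rw [hL, Complex.ofReal_mul,
        Complex.mul_cpow_ofReal_nonneg (sq_nonneg _) hLam_nonneg, cpow_sq_aux huR w]
      norm_cast
    · intro j
      have hlt := (K j).2
      show -(N u j : ℤ) < 2 * bal (N u j) (K j : ℕ) ∧ 2 * bal (N u j) (K j : ℕ) ≤ (N u j : ℤ)
      unfold bal
      split <;> omega

private lemma Ffun_tendsto (d : ℕ) (N : ℕ → Fin d → ℕ) (hN : ∀ u j, 0 < N u j)
    (α : Fin d → ℝ) (hα : ∀ j, 0 < α j)
    (hlim : ∀ j, Tendsto (fun u : ℕ => (N u j : ℝ) / (u : ℝ)) atTop (nhds (α j)))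
    (w : ℂ) (m : {m : Fin d → ℤ // m ≠ 0}) :
    Tendsto (fun u => Ffun d N w u m) atTop
      (nhds ((((∑ j, (2 * Real.pi * (m.1 j : ℝ) / α j) ^ 2 : ℝ)) : ℂ) ^ (-w))) := by
  -- N u j → ∞
  have hNtop : ∀ j, Tendsto (fun u : ℕ => (N u j : ℝ)) atTop atTop := by
    intro j
    have h1 : Tendsto (fun u : ℕ => (N u j : ℝ) / (u : ℝ) * (u : ℝ)) atTop atTop :=
      Tendsto.pos_mul_atTop (hα j) (hlim j) tendsto_natCast_atTop_atTop
    refine h1.congr' ?_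
    filter_upwards [eventually_ge_atTop 1] with u hu
    have : (u : ℝ) ≠ 0 := by positivity
    field_simp
  -- coordinatewise limit
  have hcoord : ∀ j, Tendsto (fun u : ℕ => 2 * (u : ℝ) * Real.sin (Real.pi * (m.1 j : ℝ) / (N u j : ℝ)))
      atTop (nhds (2 * Real.pi * (m.1 j : ℝ) / α j)) := by
    intro j
    rcases eq_or_ne (m.1 j) 0 with hmj | hmj
    · simp only [hmj, Int.cast_zero, mul_zero, zero_div, zero_mul, mul_zero]
      simpa using tendsto_const_nhds (α := ℝ) (x := 0) (f := atTop (α := ℕ))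
    · have hmjR : ((m.1 j : ℝ)) ≠ 0 := Int.cast_ne_zero.mpr hmj
      have hπm : Real.pi * (m.1 j : ℝ) ≠ 0 := mul_ne_zero Real.pi_ne_zero hmjR
      -- u / N u j → (α j)⁻¹
      have hinv : Tendsto (fun u : ℕ => (u : ℝ) / (N u j : ℝ)) atTop (nhds (α j)⁻¹) := by
        have := (hlim j).inv₀ (hα j).ne'
        refine this.congr fun u => ?_
        rw [inv_div]
      -- sin t / t → 1 along 𝓝[≠] 0
      have hslope : Tendsto (fun t : ℝ => Real.sin t / t) (nhdsWithin 0 {(0:ℝ)}ᶜ) (nhds 1) := by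
        have h := hasDerivAt_iff_tendsto_slope.mp (Real.hasDerivAt_sin 0)
        rw [Real.cos_zero] at h
        refine h.congr fun t => ?_
        simp [slope_def_field, Real.sin_zero]
      -- the argument tends to 0 within ≠ 0
      have harg : Tendsto (fun u : ℕ => Real.pi * (m.1 j : ℝ) / (N u j : ℝ)) atTop
          (nhdsWithin 0 {(0:ℝ)}ᶜ) := by
        rw [tendsto_nhdsWithin_iff]
        constructor
        · exact Tendsto.div_atTop tendsto_const_nhds (hNtop j)
        · filter_upwards with u
          have hn : ((N u j : ℝ)) ≠ 0 := by
            have := hN u j; positivity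
          exact div_ne_zero hπm hn
      have hmain : Tendsto (fun u : ℕ =>
          2 * (Real.pi * (m.1 j : ℝ)) * ((u : ℝ) / (N u j : ℝ)) *
            (Real.sin (Real.pi * (m.1 j : ℝ) / (N u j : ℝ)) / (Real.pi * (m.1 j : ℝ) / (N u j : ℝ))))
          atTop (nhds (2 * (Real.pi * (m.1 j : ℝ)) * (α j)⁻¹ * 1)) :=
        ((tendsto_const_nhds.mul hinv).mul (hslope.comp harg))
      have heq : ∀ u : ℕ, 2 * (Real.pi * (m.1 j : ℝ)) * ((u : ℝ) / (N u j : ℝ)) *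
            (Real.sin (Real.pi * (m.1 j : ℝ) / (N u j : ℝ)) / (Real.pi * (m.1 j : ℝ) / (N u j : ℝ)))
          = 2 * (u : ℝ) * Real.sin (Real.pi * (m.1 j : ℝ) / (N u j : ℝ)) := by
        intro u
        have hn : ((N u j : ℝ)) ≠ 0 := by
          have := hN u j; positivity
        field_simp
      have hval : 2 * (Real.pi * (m.1 j : ℝ)) * (α j)⁻¹ * 1 = 2 * Real.pi * (m.1 j : ℝ) / α j := by
        rw [mul_one, div_eq_mul_inv]
        ring
      rw [← hval]
      exact hmain.congr heq
  -- L → limit sum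
  have hL : Tendsto (fun u => Lfun d N u m.1) atTop
      (nhds (∑ j, (2 * Real.pi * (m.1 j : ℝ) / α j) ^ 2)) := by
    unfold Lfun
    exact tendsto_finset_sum _ fun j _ => (hcoord j).pow 2
  -- positivity of the limit
  have hpos : 0 < ∑ j, (2 * Real.pi * (m.1 j : ℝ) / α j) ^ 2 := by
    obtain ⟨j0, hj0⟩ : ∃ j, m.1 j ≠ 0 := by
      by_contra hc; push_neg at hc; exact m.2 (funext hc)
    refine Finset.sum_pos' (fun j _ => sq_nonneg _) ⟨j0, Finset.mem_univ j0, ?_⟩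
    have h1 : (m.1 j0 : ℝ) ≠ 0 := Int.cast_ne_zero.mpr hj0
    have h2 : 2 * Real.pi * (m.1 j0 : ℝ) / α j0 ≠ 0 :=
      div_ne_zero (mul_ne_zero (mul_ne_zero two_ne_zero Real.pi_ne_zero) h1) (hα j0).ne'
    positivity
  -- continuity of cpow at the positive limit
  have hcont : ContinuousAt (fun x : ℝ => ((x : ℝ) : ℂ) ^ (-w))
      (∑ j, (2 * Real.pi * (m.1 j : ℝ) / α j) ^ 2) := by
    have h1 : ContinuousAt (fun z : ℂ => z ^ (-w))
        (((∑ j, (2 * Real.pi * (m.1 j : ℝ) / α j) ^ 2 : ℝ) : ℂ)) := by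
      refine continuousAt_cpow_const ?_
      rw [Complex.mem_slitPlane_iff]
      left
      rw [Complex.ofReal_re]
      exact hpos
    exact h1.comp Complex.continuous_ofReal.continuousAt
  have hcomp : Tendsto (fun u => ((Lfun d N u m.1 : ℝ) : ℂ) ^ (-w)) atTop
      (nhds ((((∑ j, (2 * Real.pi * (m.1 j : ℝ) / α j) ^ 2 : ℝ)) : ℂ) ^ (-w))) :=
    hcont.tendsto.comp hL
  -- eventually the condition holds
  have hev : ∀ᶠ u in atTop, (∀ j, -(N u j : ℤ) < 2 * m.1 j ∧ 2 * m.1 j ≤ (N u j : ℤ)) := by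
    rw [eventually_all]
    intro j
    filter_upwards [(hNtop j).eventually_gt_atTop (2 * |(m.1 j : ℝ)|)] with u hu
    have h2 : (2 * |m.1 j| : ℤ) < (N u j : ℤ) := by
      have : ((2 * |m.1 j| : ℤ) : ℝ) < ((N u j : ℤ) : ℝ) := by push_cast; push_cast at hu; linarith
      exact_mod_cast this
    rcases abs_cases (m.1 j) with ⟨h,_⟩|⟨h,_⟩ <;> omega
  refine Tendsto.congr' ?_ hcomp
  filter_upwards [hev] with u hu
  unfold Ffun
  rw [if_pos hu]

/-- Convergence of rescaled spectral zeta functions of degenerating discrete tori to the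
spectral zeta function of the limiting real torus, for `Re w > d/2`. -/
theorem spectral_zeta_tendsto (d : ℕ) (hd : 1 ≤ d) (N : ℕ → Fin d → ℕ)
    (hN : ∀ u j, 0 < N u j) (α : Fin d → ℝ) (hα : ∀ j, 0 < α j)
    (hlim : ∀ j, Tendsto (fun u : ℕ => (N u j : ℝ) / (u : ℝ)) atTop (nhds (α j)))
    (w : ℂ) (hw : (d : ℝ) / 2 < w.re) :
    Summable (fun m : {m : Fin d → ℤ // m ≠ 0} =>
        ‖((((∑ j, ((m.1 j : ℝ) / α j) ^ 2 : ℝ)) : ℂ) ^ (-w))‖) ∧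
    Tendsto (fun u : ℕ =>
        ((u : ℂ)) ^ (-(2 * w)) *
          ∑ K ∈ Finset.univ.filter
              (fun K : (j : Fin d) → Fin (N u j) => Lam d (N u) K ≠ 0),
            (((Lam d (N u) K : ℝ) : ℂ)) ^ (-w))
      atTop
      (nhds ((((2 * Real.pi : ℝ) : ℂ)) ^ (-(2 * w)) *
        ∑' m : {m : Fin d → ℤ // m ≠ 0},
          (((∑ j, ((m.1 j : ℝ) / α j) ^ 2 : ℝ)) : ℂ) ^ (-w))) := by
  have hs0 : (0 : ℝ) < w.re := lt_of_le_of_lt (by positivity) hw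
  set s : ℝ := w.re with hs_def
  -- basic bounds on α
  set B : ℝ := 1 + ∑ j, α j with hB_def
  have hB : 0 < B := by
    have : 0 ≤ ∑ j, α j := Finset.sum_nonneg fun j _ => (hα j).le
    rw [hB_def]; linarith
  have hαB : ∀ j, α j ≤ B := by
    intro j
    have : α j ≤ ∑ i, α i := Finset.single_le_sum (fun i _ => (hα i).le) (Finset.mem_univ j)
    rw [hB_def]; linarith
  -- monotonicity helper
  have key_anti : ∀ {c S L : ℝ}, 0 < c → 0 < S → c * S ≤ L → L ^ (-s) ≤ c ^ (-s) * S ^ (-s) := by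
    intro c S L hc hS h
    calc L ^ (-s) ≤ (c * S) ^ (-s) :=
          Real.rpow_le_rpow_of_nonpos (mul_pos hc hS) h (neg_nonpos.mpr hs0.le)
      _ = c ^ (-s) * S ^ (-s) := Real.mul_rpow hc.le hS.le
  -- positivity and lower bound for the limit quadratic form
  have hSpos : ∀ m : {m : Fin d → ℤ // m ≠ 0}, 0 < ∑ j, ((m.1 j : ℝ)) ^ 2 := by
    intro m
    obtain ⟨j0, hj0⟩ : ∃ j, m.1 j ≠ 0 := by
      by_contra hc; push_neg at hc; exact m.2 (funext hc)
    refine Finset.sum_pos' (fun j _ => sq_nonneg _) ⟨j0, Finset.mem_univ j0, ?_⟩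
    have : (m.1 j0 : ℝ) ≠ 0 := Int.cast_ne_zero.mpr hj0
    positivity
  have hS'pos : ∀ m : {m : Fin d → ℤ // m ≠ 0}, 0 < ∑ j, ((m.1 j : ℝ) / α j) ^ 2 := by
    intro m
    obtain ⟨j0, hj0⟩ : ∃ j, m.1 j ≠ 0 := by
      by_contra hc; push_neg at hc; exact m.2 (funext hc)
    refine Finset.sum_pos' (fun j _ => sq_nonneg _) ⟨j0, Finset.mem_univ j0, ?_⟩
    have h1 : (m.1 j0 : ℝ) ≠ 0 := Int.cast_ne_zero.mpr hj0
    have h2 : α j0 ≠ 0 := (hα j0).ne'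
    positivity
  have hS'low : ∀ m : {m : Fin d → ℤ // m ≠ 0},
      (B ^ 2)⁻¹ * ∑ j, ((m.1 j : ℝ)) ^ 2 ≤ ∑ j, ((m.1 j : ℝ) / α j) ^ 2 := by
    intro m
    rw [Finset.mul_sum]
    refine Finset.sum_le_sum fun j _ => ?_
    rw [div_pow, inv_mul_eq_div]
    have h1 : (0:ℝ) < α j ^ 2 := pow_pos (hα j) 2
    have h2 : α j ^ 2 ≤ B ^ 2 := by nlinarith [hα j, hαB j, hB]
    exact div_le_div_of_nonneg_left (sq_nonneg _) h1 h2
  have hsummable : Summable (fun m : {m : Fin d → ℤ // m ≠ 0} =>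
      ((B ^ 2)⁻¹) ^ (-s) * (∑ j, ((m.1 j : ℝ)) ^ 2) ^ (-s)) :=
    (summable_sq_sum hd hw).mul_left _
  have conj1 : Summable (fun m : {m : Fin d → ℤ // m ≠ 0} =>
      ‖((((∑ j, ((m.1 j : ℝ) / α j) ^ 2 : ℝ)) : ℂ) ^ (-w))‖) := by
    refine hsummable.of_nonneg_of_le (fun m => norm_nonneg _) fun m => ?_
    rw [Complex.norm_cpow_eq_rpow_re_of_pos (hS'pos m), Complex.neg_re]
    exact key_anti (inv_pos.mpr (pow_pos hB 2)) (hSpos m) (hS'low m)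
  refine ⟨conj1, ?_⟩
  -- the constant in the lower bound for rescaled eigenvalues
  set c : ℝ := 4 * (B ^ 2)⁻¹ with hc_def
  have hc : 0 < c := by
    rw [hc_def]
    have := pow_pos hB 2
    positivity
  have hbound_sum : Summable (fun m : {m : Fin d → ℤ // m ≠ 0} =>
      c ^ (-s) * (∑ j, ((m.1 j : ℝ)) ^ 2) ^ (-s)) :=
    (summable_sq_sum hd hw).mul_left _
  -- eventual domination
  have hNle : ∀ᶠ u : ℕ in atTop, ∀ j, (N u j : ℝ) ≤ 2 * α j * u := by
    rw [eventually_all]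
    intro j
    have h1 : ∀ᶠ u : ℕ in atTop, (N u j : ℝ) / (u : ℝ) ≤ 2 * α j :=
      (hlim j).eventually (eventually_le_nhds (by linarith [hα j]))
    filter_upwards [h1, eventually_ge_atTop 1] with u hu hu1
    have huR : (0 : ℝ) < (u : ℝ) := by exact_mod_cast hu1
    calc (N u j : ℝ) = (N u j : ℝ) / (u : ℝ) * u := by field_simp
      _ ≤ 2 * α j * u := by
          exact mul_le_mul_of_nonneg_right hu huR.le
  have hbound : ∀ᶠ u : ℕ in atTop, ∀ m : {m : Fin d → ℤ // m ≠ 0},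
      ‖Ffun d N w u m‖ ≤ c ^ (-s) * (∑ j, ((m.1 j : ℝ)) ^ 2) ^ (-s) := by
    filter_upwards [hNle, eventually_ge_atTop 1] with u hNu hu1 m
    have huR : (1 : ℝ) ≤ (u : ℝ) := by exact_mod_cast hu1
    rw [Ffun]
    split
    case isFalse h =>
      rw [norm_zero]
      positivity
    case isTrue hcond =>
      -- lower bound for Lfun
      have hLlow : c * ∑ j, ((m.1 j : ℝ)) ^ 2 ≤ Lfun d N u m.1 := by
        rw [Finset.mul_sum, Lfun]
        refine Finset.sum_le_sum fun j _ => ?_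
        have hn0 : (0 : ℝ) < (N u j : ℝ) := by exact_mod_cast hN u j
        have h2m : 2 * |m.1 j| ≤ (N u j : ℤ) := by
          have := hcond j
          rcases abs_cases (m.1 j) with ⟨h, _⟩ | ⟨h, _⟩ <;> omega
        have h2mR : 2 * |(m.1 j : ℝ)| ≤ (N u j : ℝ) := by
          have : ((2 * |m.1 j| : ℤ) : ℝ) ≤ ((N u j : ℤ) : ℝ) := by exact_mod_cast h2m
          push_cast at this
          exact this
        -- the sine lower bound via concavity
        set y : ℝ := Real.pi * |(m.1 j : ℝ)| / (N u j : ℝ) with hy_def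
        have hy0 : 0 ≤ y := by
          rw [hy_def]
          positivity
        have hy2 : y ≤ Real.pi / 2 := by
          rw [hy_def, div_le_div_iff₀ hn0 (by norm_num : (0:ℝ) < 2)]
          nlinarith [Real.pi_pos]
        have hsiny : 2 * |(m.1 j : ℝ)| / (N u j : ℝ) ≤ Real.sin y := by
          have := Real.mul_le_sin hy0 hy2
          calc 2 * |(m.1 j : ℝ)| / (N u j : ℝ)
              = 2 / Real.pi * y := by
                rw [hy_def]
                field_simp
            _ ≤ Real.sin y := this
        have hsq : (Real.sin (Real.pi * ((m.1 j : ℝ)) / (N u j : ℝ))) ^ 2 = (Real.sin y) ^ 2 := by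
          rw [hy_def]
          rcases abs_cases ((m.1 j : ℝ)) with ⟨h, _⟩ | ⟨h, _⟩
          · rw [h]
          · rw [h]
            have : Real.pi * -(m.1 j : ℝ) / (N u j : ℝ)
                = -(Real.pi * (m.1 j : ℝ) / (N u j : ℝ)) := by ring
            rw [this, Real.sin_neg]
            ring
        have hsinsq : (2 * |(m.1 j : ℝ)| / (N u j : ℝ)) ^ 2
            ≤ (Real.sin (Real.pi * ((m.1 j : ℝ)) / (N u j : ℝ))) ^ 2 := by
          rw [hsq]
          exact pow_le_pow_left₀ (by positivity) hsiny 2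
        have hnB : (N u j : ℝ) ≤ 2 * B * (u : ℝ) := by
          calc (N u j : ℝ) ≤ 2 * α j * u := hNu j
            _ ≤ 2 * B * u := by
                have h0u : (0:ℝ) ≤ (u : ℝ) := by positivity
                nlinarith [hαB j]
        have hu0 : (0:ℝ) < (u : ℝ) := lt_of_lt_of_le one_pos huR
        -- combine
        have habs2 : |(m.1 j : ℝ)| ^ 2 = ((m.1 j : ℝ)) ^ 2 := sq_abs _
        have hmain : c * ((m.1 j : ℝ)) ^ 2
            ≤ (2 * (u:ℝ)) ^ 2 * (2 * |(m.1 j : ℝ)| / (N u j : ℝ)) ^ 2 := by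
          have hB0 : B ≠ 0 := hB.ne'
          have hu0' : ((u:ℝ)) ≠ 0 := hu0.ne'
          have hn2 : (N u j : ℝ) ^ 2 ≤ 4 * B ^ 2 * (u:ℝ) ^ 2 := by
            nlinarith [hn0, hnB, hu0, hB]
          have e : (2 * (u:ℝ)) ^ 2 * (2 * |(m.1 j : ℝ)| / (N u j : ℝ)) ^ 2
              = 16 * (u:ℝ) ^ 2 * (((m.1 j : ℝ)) ^ 2 / (N u j : ℝ) ^ 2) := by
            rw [div_pow, mul_pow 2 |(m.1 j : ℝ)|, sq_abs]
            ring
          rw [e, hc_def]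
          have h1 : ((m.1 j : ℝ)) ^ 2 / (4 * B ^ 2 * (u:ℝ) ^ 2)
              ≤ ((m.1 j : ℝ)) ^ 2 / (N u j : ℝ) ^ 2 :=
            div_le_div_of_nonneg_left (sq_nonneg _) (pow_pos hn0 2) hn2
          have h2 : 4 * (B ^ 2)⁻¹ * ((m.1 j : ℝ)) ^ 2
              = 16 * (u:ℝ) ^ 2 * (((m.1 j : ℝ)) ^ 2 / (4 * B ^ 2 * (u:ℝ) ^ 2)) := by
            field_simp
            ring
          rw [h2]
          exact mul_le_mul_of_nonneg_left h1 (by positivity)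
        calc c * ((m.1 j : ℝ)) ^ 2
            ≤ (2 * (u:ℝ)) ^ 2 * (2 * |(m.1 j : ℝ)| / (N u j : ℝ)) ^ 2 := hmain
          _ ≤ (2 * (u:ℝ)) ^ 2 * (Real.sin (Real.pi * ((m.1 j : ℝ)) / (N u j : ℝ))) ^ 2 := by
              exact mul_le_mul_of_nonneg_left hsinsq (by positivity)
          _ = (2 * (u:ℝ) * Real.sin (Real.pi * ((m.1 j : ℝ)) / (N u j : ℝ))) ^ 2 := by
              ring
      have hLpos : 0 < Lfun d N u m.1 :=
        lt_of_lt_of_le (mul_pos hc (hSpos m)) hLlow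
      rw [Complex.norm_cpow_eq_rpow_re_of_pos hLpos, Complex.neg_re]
      exact key_anti hc (hSpos m) hLlow
  -- Tannery's theorem
  have htannery := tendsto_tsum_of_dominated_convergence hbound_sum
    (fun m => Ffun_tendsto d N hN α hα hlim w m) hbound
  -- identify the limit value
  have hlim_eq : ∑' m : {m : Fin d → ℤ // m ≠ 0},
        (((∑ j, (2 * Real.pi * (m.1 j : ℝ) / α j) ^ 2 : ℝ)) : ℂ) ^ (-w)
      = (((2 * Real.pi : ℝ) : ℂ)) ^ (-(2 * w)) *
        ∑' m : {m : Fin d → ℤ // m ≠ 0},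
          (((∑ j, ((m.1 j : ℝ) / α j) ^ 2 : ℝ)) : ℂ) ^ (-w) := by
    rw [← tsum_mul_left]
    refine tsum_congr fun m => ?_
    have hfactor : (∑ j, (2 * Real.pi * (m.1 j : ℝ) / α j) ^ 2)
        = (2 * Real.pi) ^ 2 * ∑ j, ((m.1 j : ℝ) / α j) ^ 2 := by
      rw [Finset.mul_sum]
      exact Finset.sum_congr rfl fun j _ => by ring
    have hsum_nonneg : 0 ≤ ∑ j, ((m.1 j : ℝ) / α j) ^ 2 :=
      Finset.sum_nonneg fun j _ => sq_nonneg _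
    rw [hfactor, Complex.ofReal_mul,
      Complex.mul_cpow_ofReal_nonneg (sq_nonneg _) hsum_nonneg,
      cpow_sq_aux (by positivity : (0:ℝ) < 2 * Real.pi) w]
  rw [← hlim_eq]
  refine Tendsto.congr' ?_ htannery
  filter_upwards [eventually_ge_atTop 1] with u hu
  exact (tsum_eq_lemma d hd N hN w u hu).symm
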